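/- Let X be a Banach space and C > 0 such that wca_ρ(x_n) ≤ C·wk_X({x_n : n ∈ ℕ}) for every bounded sequence (x_n) in X. Then for every Banach space Y and every bounded linear operator T : Y → X, cc(T*) ≤ 2C·wk_X(T(B_Y)), where T* : X* → Y* is the adjoint and B_Y is the closed unit ball of Y. -/

import Mathlib

open Metric NormedSpace Filter Topology Set

noncomputable section

/-- A subset of a Banach space is weakly compact if it is compact in the weak topology. -/
def IsWeaklyCompact {Z : Type*} [NormedAddCommGroup Z] [NormedSpace ℝ Z] (K : Set Z) : Prop :=
  IsCompact (toWeakSpace ℝ Z '' K)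

/-- `ca (x_k) = inf_n sup_{i,j ≥ n} ‖x_i - x_j‖`. -/
def ca {Z : Type*} [NormedAddCommGroup Z] (x : ℕ → Z) : ℝ :=
  ⨅ n : ℕ, sSup {r : ℝ | ∃ i j : ℕ, n ≤ i ∧ n ≤ j ∧ r = ‖x i - x j‖}

/-- `wca` is the infimum of `ca` over all subsequences. -/
def wca {Z : Type*} [NormedAddCommGroup Z] (x : ℕ → Z) : ℝ :=
  ⨅ φ : {φ : ℕ → ℕ // StrictMono φ}, ca (x ∘ φ)

/-- A sequence is weakly Cauchy if `(x*(x_k))` converges for every functional `x*`. -/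
def WeaklyCauchy {Z : Type*} [NormedAddCommGroup Z] [NormedSpace ℝ Z] (x : ℕ → Z) : Prop :=
  ∀ f : StrongDual ℝ Z, ∃ l : ℝ, Tendsto (fun n => f (x n)) atTop (nhds l)

/-- A sequence is weakly null if `x*(x_k) → 0` for every functional `x*`. -/
def WeaklyNull {Z : Type*} [NormedAddCommGroup Z] [NormedSpace ℝ Z] (x : ℕ → Z) : Prop :=
  ∀ f : StrongDual ℝ Z, Tendsto (fun n => f (x n)) atTop (nhds 0)

/-- `cc T`: measure of non-complete-continuity of an operator. -/
def cc {X Y : Type*} [NormedAddCommGroup X] [NormedSpace ℝ X]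
    [NormedAddCommGroup Y] [NormedSpace ℝ Y] (T : X →L[ℝ] Y) : ℝ :=
  sSup {r : ℝ | ∃ x : ℕ → X, (∀ n, ‖x n‖ ≤ 1) ∧ WeaklyCauchy x ∧
    r = ca (fun n => T (x n))}

/-- Non-symmetrized Hausdorff distance `d̂(A,B) = sup_{a ∈ A} dist(a, B)`. -/
def dhat {Z : Type*} [NormedAddCommGroup Z] (A B : Set Z) : ℝ :=
  ⨆ a : A, infDist (a : Z) B

/-- de Blasi measure of weak non-compactness. -/
def deBlasiOmega {Z : Type*} [NormedAddCommGroup Z] [NormedSpace ℝ Z] (A : Set Z) : ℝ :=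
  ⨅ K : {K : Set Z // K.Nonempty ∧ IsWeaklyCompact K}, dhat A K

/-- Hausdorff measure of non-compactness. -/
def hausdorffChi {Z : Type*} [NormedAddCommGroup Z] (A : Set Z) : ℝ :=
  ⨅ F : {F : Set Z // F.Finite ∧ F.Nonempty}, dhat A F

/-- weak* closure of a set of functionals. -/
def wstarClosure {E : Type*} [NormedAddCommGroup E] [NormedSpace ℝ E]
    (A : Set (StrongDual ℝ E)) : Set (StrongDual ℝ E) :=
  StrongDual.toWeakDual ⁻¹' closure (StrongDual.toWeakDual '' A)

/-- `wk_Z(A) = d̂(cl_{w*}(ι(A)), ι(Z))` in the bidual. -/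
def wkMeasure {Z : Type*} [NormedAddCommGroup Z] [NormedSpace ℝ Z] (A : Set Z) : ℝ :=
  dhat (wstarClosure ((inclusionInDoubleDual ℝ Z) '' A))
    (Set.range (inclusionInDoubleDual ℝ Z))

/-- `z` is a weak* cluster point of the sequence `u` of functionals. -/
def IsWeakStarClusterPt {E : Type*} [NormedAddCommGroup E] [NormedSpace ℝ E]
    (z : StrongDual ℝ E) (u : ℕ → StrongDual ℝ E) : Prop :=
  MapClusterPt (StrongDual.toWeakDual z) atTop (fun n => StrongDual.toWeakDual (u n))

/-- `wck(A)`. -/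
def wck {Z : Type*} [NormedAddCommGroup Z] [NormedSpace ℝ Z] (A : Set Z) : ℝ :=
  sSup {r : ℝ | ∃ x : ℕ → Z, (∀ n, x n ∈ A) ∧
    r = sInf {s : ℝ | ∃ (z : StrongDual ℝ (StrongDual ℝ Z)) (x₀ : Z),
      IsWeakStarClusterPt z (fun n => inclusionInDoubleDual ℝ Z (x n)) ∧
      s = ‖z - inclusionInDoubleDual ℝ Z x₀‖}}

/-- `ca_ρ` of a sequence. -/
def caRho {Z : Type*} [NormedAddCommGroup Z] [NormedSpace ℝ Z] (x : ℕ → Z) : ℝ :=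
  ⨆ K : {K : Set (StrongDual ℝ Z) // K ⊆ closedBall 0 1 ∧ IsWeaklyCompact K},
    ⨅ n : ℕ, sSup {r : ℝ | ∃ i j : ℕ, n ≤ i ∧ n ≤ j ∧
      ∃ f ∈ K.1, r = |f (x i) - f (x j)|}

/-- `wca_ρ` of a sequence. -/
def wcaRho {Z : Type*} [NormedAddCommGroup Z] [NormedSpace ℝ Z] (x : ℕ → Z) : ℝ :=
  ⨅ φ : {φ : ℕ → ℕ // StrictMono φ}, caRho (x ∘ φ)

/-- `ca_{ρ*}` of a sequence in a dual space. -/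
def caRhoStar {Z : Type*} [NormedAddCommGroup Z] [NormedSpace ℝ Z]
    (x : ℕ → StrongDual ℝ Z) : ℝ :=
  ⨆ K : {K : Set Z // K ⊆ closedBall 0 1 ∧ IsWeaklyCompact K},
    ⨅ n : ℕ, sSup {r : ℝ | ∃ i j : ℕ, n ≤ i ∧ n ≤ j ∧
      ∃ v ∈ K.1, r = |x i v - x j v|}

/-- `wca_{ρ*}` of a sequence in a dual space. -/
def wcaRhoStar {Z : Type*} [NormedAddCommGroup Z] [NormedSpace ℝ Z]
    (x : ℕ → StrongDual ℝ Z) : ℝ :=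
  ⨅ φ : {φ : ℕ → ℕ // StrictMono φ}, caRhoStar (x ∘ φ)

/-- `δ(x_k)`. -/
def deltaSeq {Z : Type*} [NormedAddCommGroup Z] [NormedSpace ℝ Z] (x : ℕ → Z) : ℝ :=
  ⨆ f : (closedBall (0 : StrongDual ℝ Z) 1),
    ⨅ n : ℕ, sSup {r : ℝ | ∃ i j : ℕ, n ≤ i ∧ n ≤ j ∧
      r = |(f : StrongDual ℝ Z) (x i) - (f : StrongDual ℝ Z) (x j)|}

/-- The adjoint of a bounded operator between Banach spaces. -/
def adjointOp {X Y : Type*} [NormedAddCommGroup X] [NormedSpace ℝ X]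
    [NormedAddCommGroup Y] [NormedSpace ℝ Y] (T : X →L[ℝ] Y) :
    StrongDual ℝ Y →L[ℝ] StrongDual ℝ X :=
  (ContinuousLinearMap.compL ℝ X Y ℝ).flip T

section Aux

instance : Nonempty {φ : ℕ → ℕ // StrictMono φ} := ⟨⟨id, strictMono_id⟩⟩

lemma adjointOp_apply {X Y : Type*} [NormedAddCommGroup X] [NormedSpace ℝ X]
    [NormedAddCommGroup Y] [NormedSpace ℝ Y] (T : X →L[ℝ] Y) (f : StrongDual ℝ Y) (x : X) :
    adjointOp T f x = f (T x) := rfl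

lemma norm_le_of_mem_wstarClosure {E : Type*} [NormedAddCommGroup E] [NormedSpace ℝ E]
    {S : Set (StrongDual ℝ E)} {R : ℝ} (hR : 0 ≤ R) (hS : ∀ s ∈ S, ‖s‖ ≤ R) :
    ∀ z ∈ wstarClosure S, ‖z‖ ≤ R := by
  intro z hz
  set Cset : Set (WeakDual ℝ E) := {F : WeakDual ℝ E | ∀ v : E, ‖F v‖ ≤ R * ‖v‖} with hCset
  have hclosed : IsClosed Cset := by
    have : Cset = ⋂ v : E, {F : WeakDual ℝ E | ‖F v‖ ≤ R * ‖v‖} := by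
      ext F; simp [hCset]
    rw [this]
    exact isClosed_iInter fun v =>
      isClosed_le ((WeakDual.eval_continuous v).norm) continuous_const
  have hsub : closure (StrongDual.toWeakDual '' S) ⊆ Cset := by
    apply closure_minimal _ hclosed
    rintro F ⟨s, hs, rfl⟩ v
    calc ‖s v‖ ≤ ‖s‖ * ‖v‖ := s.le_opNorm v
    _ ≤ R * ‖v‖ := mul_le_mul_of_nonneg_right (hS s hs) (norm_nonneg v)
  have hz' : ∀ v : E, ‖z v‖ ≤ R * ‖v‖ := hsub hz
  exact z.opNorm_le_bound hR hz'

lemma wkMeasure_nonneg {Z : Type*} [NormedAddCommGroup Z] [NormedSpace ℝ Z] (A : Set Z) :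
    0 ≤ wkMeasure A :=
  Real.iSup_nonneg fun _ => infDist_nonneg

lemma wkMeasure_mono {Z : Type*} [NormedAddCommGroup Z] [NormedSpace ℝ Z] {A B : Set Z}
    (hAB : A ⊆ B) {R : ℝ} (hR : 0 ≤ R) (hB : ∀ b ∈ B, ‖b‖ ≤ R) :
    wkMeasure A ≤ wkMeasure B := by
  set ι := inclusionInDoubleDual ℝ Z with hι
  have hbound : ∀ z ∈ wstarClosure (ι '' B), ‖z‖ ≤ R := by
    apply norm_le_of_mem_wstarClosure hR
    rintro s ⟨b, hb, rfl⟩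
    exact le_trans (double_dual_bound ℝ Z b) (hB b hb)
  have hbdd : BddAbove (Set.range fun a : (wstarClosure (ι '' B)) =>
      infDist (a : StrongDual ℝ (StrongDual ℝ Z)) (Set.range ι)) := by
    refine ⟨R, ?_⟩
    rintro r ⟨⟨a, ha⟩, rfl⟩
    have h0 : infDist a (Set.range ι) ≤ dist a (ι 0) :=
      infDist_le_dist_of_mem (Set.mem_range_self 0)
    have : dist a (ι 0) = ‖a‖ := by
      rw [map_zero, dist_zero_right]
    exact le_trans h0 (this ▸ hbound a ha)
  have hsub : wstarClosure (ι '' A) ⊆ wstarClosure (ι '' B) :=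
    Set.preimage_mono (closure_mono (Set.image_mono (Set.image_mono hAB)))
  unfold wkMeasure dhat
  refine Real.iSup_le (fun a => ?_) (Real.iSup_nonneg fun _ => infDist_nonneg)
  exact le_ciSup_of_le hbdd ⟨(a : StrongDual ℝ (StrongDual ℝ Z)), hsub a.2⟩ le_rfl

lemma isWeaklyCompact_insert_zero_range {Z : Type*} [NormedAddCommGroup Z] [NormedSpace ℝ Z]
    [CompleteSpace Z] (g : ℕ → Z)
    (hg : ∀ F : StrongDual ℝ Z, Tendsto (fun n => F (g n)) atTop (𝓝 0)) :
    IsWeaklyCompact (insert (0 : Z) (Set.range g)) := by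
  have hinj : Function.Injective ((topDualPairing ℝ Z).flip) := by
    intro u v huv
    refine (eq_iff_forall_dual_eq ℝ).2 fun f => ?_
    have := DFunLike.congr_fun huv f
    simpa [topDualPairing_apply] using this
  have htend : Tendsto (fun n => toWeakSpace ℝ Z (g n)) atTop (𝓝 (toWeakSpace ℝ Z 0)) := by
    refine (WeakBilin.tendsto_iff_forall_eval_tendsto _ hinj).mpr ?_
    intro f
    show Tendsto (fun n => f (g n)) atTop (𝓝 (f 0))
    simpa [topDualPairing_apply] using hg f
  have hK := htend.isCompact_insert_range
  unfold IsWeaklyCompact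
  have himg : toWeakSpace ℝ Z '' insert (0 : Z) (Set.range g) =
      insert (toWeakSpace ℝ Z 0) (Set.range fun n => toWeakSpace ℝ Z (g n)) := by
    rw [Set.image_insert_eq]
    congr 1
    rw [← Set.range_comp]
    rfl
  rw [himg]
  exact hK

lemma ca_adjoint_le {X : Type*} [NormedAddCommGroup X] [NormedSpace ℝ X] [CompleteSpace X]
    {Y : Type*} [NormedAddCommGroup Y] [NormedSpace ℝ Y]
    (C : ℝ) (hC : 0 < C)
    (h : ∀ x : ℕ → X, (∃ M : ℝ, ∀ n, ‖x n‖ ≤ M) →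
      wcaRho x ≤ C * wkMeasure (Set.range x))
    (T : Y →L[ℝ] X) (f : ℕ → StrongDual ℝ X) (hf1 : ∀ n, ‖f n‖ ≤ 1) (hfc : WeaklyCauchy f) :
    ca (fun n => adjointOp T (f n)) ≤ 2 * C * wkMeasure (T '' closedBall 0 1) := by
  set w := wkMeasure (T '' closedBall (0 : Y) 1) with hw
  set g : ℕ → StrongDual ℝ Y := fun n => adjointOp T (f n) with hg
  set a := ca g with ha
  refine le_of_forall_pos_le_add fun ε hε => ?_
  have hε4 : (0 : ℝ) < ε / 4 := by linarith
  set ε' := ε / 4 with hε'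
  -- the sets appearing in `ca g`
  set s : ℕ → Set ℝ := fun n => {r : ℝ | ∃ i j : ℕ, n ≤ i ∧ n ≤ j ∧ r = ‖g i - g j‖} with hs
  have hsne : ∀ n, (s n).Nonempty := fun n => ⟨‖g n - g n‖, n, n, le_rfl, le_rfl, rfl⟩
  have hsbdd : ∀ n, BddAbove (s n) := by
    intro n
    refine ⟨2 * ‖adjointOp T‖, ?_⟩
    rintro r ⟨i, j, _, _, rfl⟩
    have hgi : ∀ m, ‖g m‖ ≤ ‖adjointOp T‖ := fun m => by
      calc ‖g m‖ ≤ ‖adjointOp T‖ * ‖f m‖ := (adjointOp T).le_opNorm (f m)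
      _ ≤ ‖adjointOp T‖ * 1 := by
          exact mul_le_mul_of_nonneg_left (hf1 m) (norm_nonneg (adjointOp T))
      _ = ‖adjointOp T‖ := mul_one _
    calc ‖g i - g j‖ ≤ ‖g i‖ + ‖g j‖ := norm_sub_le _ _
    _ ≤ ‖adjointOp T‖ + ‖adjointOp T‖ := add_le_add (hgi i) (hgi j)
    _ = 2 * ‖adjointOp T‖ := by ring
  have hsnn : ∀ n, 0 ≤ sSup (s n) := by
    intro n
    apply Real.sSup_nonneg
    rintro r ⟨i, j, _, _, rfl⟩
    exact norm_nonneg _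
  have ha_le : ∀ k, a ≤ sSup (s k) := by
    intro k
    refine ciInf_le ⟨0, ?_⟩ k
    rintro r ⟨n, rfl⟩
    exact hsnn n
  -- Step A : choose indices and points
  have key : ∀ k : ℕ, ∃ i j : ℕ, ∃ y : Y, k ≤ i ∧ k ≤ j ∧ ‖y‖ ≤ 1 ∧
      a - ε' < |f i (T y) - f j (T y)| := by
    intro k
    have hlt : a - ε' < sSup (s k) := lt_of_lt_of_le (by linarith) (ha_le k)
    obtain ⟨r, ⟨i, j, hik, hjk, rfl⟩, hr⟩ :=
      (lt_csSup_iff (hsbdd k) (hsne k)).1 hlt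
    obtain ⟨y, hy1, hy2⟩ := (g i - g j).exists_lt_apply_of_lt_opNorm hr
    refine ⟨i, j, y, hik, hjk, le_of_lt hy1, ?_⟩
    have : (g i - g j) y = f i (T y) - f j (T y) := by
      simp [hg, ContinuousLinearMap.sub_apply, adjointOp_apply]
    rwa [this, Real.norm_eq_abs] at hy2
  choose I J y hI hJ hy1 hbig using key
  set x : ℕ → X := fun k => T (y k) with hx
  have hxnorm : ∀ k, ‖x k‖ ≤ ‖T‖ := fun k => by
    calc ‖T (y k)‖ ≤ ‖T‖ * ‖y k‖ := T.le_opNorm (y k)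
    _ ≤ ‖T‖ * 1 := mul_le_mul_of_nonneg_left (hy1 k) (norm_nonneg _)
    _ = ‖T‖ := mul_one _
  set gg : ℕ → StrongDual ℝ X := fun k => (2⁻¹ : ℝ) • (f (I k) - f (J k)) with hgg
  have hggnorm : ∀ k, ‖gg k‖ ≤ 1 := by
    intro k
    have : ‖gg k‖ = 2⁻¹ * ‖f (I k) - f (J k)‖ := by
      rw [hgg]; simp [norm_smul]
    rw [this]
    have : ‖f (I k) - f (J k)‖ ≤ 2 := by
      calc ‖f (I k) - f (J k)‖ ≤ ‖f (I k)‖ + ‖f (J k)‖ := norm_sub_le _ _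
      _ ≤ 1 + 1 := add_le_add (hf1 _) (hf1 _)
      _ = 2 := by norm_num
    linarith
  -- weak nullity of gg
  have hggnull : ∀ F : StrongDual ℝ (StrongDual ℝ X), Tendsto (fun k => F (gg k)) atTop (𝓝 0) := by
    intro F
    obtain ⟨l, hl⟩ := hfc F
    have hIt : Tendsto I atTop atTop := tendsto_atTop_mono hI tendsto_id
    have hJt : Tendsto J atTop atTop := tendsto_atTop_mono hJ tendsto_id
    have hlI : Tendsto (fun k => F (f (I k))) atTop (𝓝 l) := hl.comp hIt
    have hlJ : Tendsto (fun k => F (f (J k))) atTop (𝓝 l) := hl.comp hJt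
    have : Tendsto (fun k => (2⁻¹ : ℝ) * (F (f (I k)) - F (f (J k)))) atTop
        (𝓝 ((2⁻¹ : ℝ) * (l - l))) := ((hlI.sub hlJ).const_mul _)
    have heq : (fun k => F (gg k)) =
        fun k => (2⁻¹ : ℝ) * (F (f (I k)) - F (f (J k))) := by
      funext k
      rw [hgg]
      simp [map_smul, map_sub, smul_eq_mul]
    rw [heq]
    simpa using this
  -- pointwise nullity of gg
  have hggpt : ∀ v : X, Tendsto (fun k => gg k v) atTop (𝓝 0) := by
    intro v
    have := hggnull (inclusionInDoubleDual ℝ X v)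
    simpa [NormedSpace.dual_def] using this
  -- the weakly compact set K
  set K : Set (StrongDual ℝ X) := insert 0 (Set.range gg) with hK
  have hKball : K ⊆ closedBall 0 1 := by
    rintro z (rfl | ⟨k, rfl⟩)
    · exact mem_closedBall_self zero_le_one
    · rw [mem_closedBall_zero_iff]; exact hggnorm k
  have hKcomp : IsWeaklyCompact K := isWeaklyCompact_insert_zero_range gg hggnull
  -- lower bound for |gg k (x k)|
  have hbig' : ∀ k, (a - ε') / 2 < |gg k (x k)| := by
    intro k
    have : gg k (x k) = 2⁻¹ * (f (I k) (x k) - f (J k) (x k)) := by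
      rw [hgg]; simp [ContinuousLinearMap.smul_apply, ContinuousLinearMap.sub_apply,
        smul_eq_mul]
    rw [this, abs_mul, abs_of_pos (by norm_num : (0:ℝ) < (2⁻¹:ℝ))]
    have := hbig k
    rw [hx]
    linarith [hbig k]
  -- Step B: lower bound for wcaRho x
  have hlowB : (a - ε') / 2 - ε' ≤ wcaRho x := by
    refine le_ciInf fun φ => ?_
    obtain ⟨φ, hφ⟩ := φ
    -- the inner sets for a given K'
    set t : Set (StrongDual ℝ X) → ℕ → Set ℝ := fun K' n =>
      {r : ℝ | ∃ i j : ℕ, n ≤ i ∧ n ≤ j ∧ ∃ fK ∈ K', r = |fK ((x ∘ φ) i) - fK ((x ∘ φ) j)|}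
      with ht
    have htbdd : ∀ K' : Set (StrongDual ℝ X), K' ⊆ closedBall 0 1 → ∀ n,
        ∀ r ∈ t K' n, r ≤ 2 * ‖T‖ := by
      rintro K' hK' n r ⟨i, j, _, _, fK, hfK, rfl⟩
      have hfK1 : ‖fK‖ ≤ 1 := mem_closedBall_zero_iff.1 (hK' hfK)
      have h1 : ∀ m, |fK (x m)| ≤ ‖T‖ := by
        intro m
        calc |fK (x m)| = ‖fK (x m)‖ := (Real.norm_eq_abs _).symm
        _ ≤ ‖fK‖ * ‖x m‖ := fK.le_opNorm _
        _ ≤ 1 * ‖T‖ := mul_le_mul hfK1 (hxnorm m) (norm_nonneg _) zero_le_one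
        _ = ‖T‖ := one_mul _
      calc |fK ((x ∘ φ) i) - fK ((x ∘ φ) j)| ≤ |fK ((x ∘ φ) i)| + |fK ((x ∘ φ) j)| :=
          abs_sub _ _
      _ ≤ ‖T‖ + ‖T‖ := add_le_add (h1 _) (h1 _)
      _ = 2 * ‖T‖ := by ring
    have hTnn : (0:ℝ) ≤ 2 * ‖T‖ := by positivity
    -- bddAbove of the K'-indexed family
    have hfam : ∀ K' : {K' : Set (StrongDual ℝ X) // K' ⊆ closedBall 0 1 ∧ IsWeaklyCompact K'},
        (⨅ n : ℕ, sSup (t K'.1 n)) ≤ 2 * ‖T‖ := by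
      rintro ⟨K', hK'ball, _⟩
      have hnn : ∀ n, 0 ≤ sSup (t K' n) := by
        intro n
        rcases Set.eq_empty_or_nonempty (t K' n) with he | hne
        · rw [he, Real.sSup_empty]
        · apply Real.sSup_nonneg
          rintro r ⟨i, j, _, _, fK, _, rfl⟩
          exact abs_nonneg _
      refine le_trans (ciInf_le ⟨0, ?_⟩ 0) ?_
      · rintro r ⟨n, rfl⟩; exact hnn n
      · exact Real.sSup_le (htbdd K' hK'ball 0) hTnn
    have hbddfam : BddAbove (Set.range fun
        K' : {K' : Set (StrongDual ℝ X) // K' ⊆ closedBall 0 1 ∧ IsWeaklyCompact K'} =>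
        ⨅ n : ℕ, sSup (t K'.1 n)) := by
      refine ⟨2 * ‖T‖, ?_⟩
      rintro r ⟨K', rfl⟩
      exact hfam K'
    -- lower bound at our K
    have hlowK : (a - ε') / 2 - ε' ≤ ⨅ n : ℕ, sSup (t K n) := by
      refine le_ciInf fun n => ?_
      -- choose i
      obtain ⟨M, hM⟩ := (Metric.tendsto_atTop.1 (hggpt (x (φ n)))) ε' hε4
      set i := max n M with hi
      have hφi : M ≤ φ i := le_trans (le_max_right n M) (hφ.le_apply)
      have hsmall : |gg (φ i) (x (φ n))| < ε' := by
        have := hM (φ i) hφi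
        rwa [Real.dist_eq, sub_zero] at this
      have hmem : |gg (φ i) ((x ∘ φ) i) - gg (φ i) ((x ∘ φ) n)| ∈ t K n :=
        ⟨i, n, le_max_left n M, le_rfl, gg (φ i),
          Set.mem_insert_of_mem _ (Set.mem_range_self _), rfl⟩
      have hlower : (a - ε') / 2 - ε' ≤
          |gg (φ i) ((x ∘ φ) i) - gg (φ i) ((x ∘ φ) n)| := by
        have h1 : (a - ε') / 2 < |gg (φ i) (x (φ i))| := hbig' (φ i)
        have h2 : |gg (φ i) (x (φ i))| - |gg (φ i) (x (φ n))| ≤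
            |gg (φ i) (x (φ i)) - gg (φ i) (x (φ n))| := abs_sub_abs_le_abs_sub _ _
        simp only [Function.comp_apply]
        linarith [hsmall]
      refine le_trans hlower (le_csSup ⟨2 * ‖T‖, fun r hr => htbdd K hKball n r hr⟩ hmem)
    calc (a - ε') / 2 - ε' ≤ ⨅ n : ℕ, sSup (t K n) := hlowK
    _ ≤ caRho (x ∘ φ) := le_ciSup_of_le hbddfam ⟨K, hKball, hKcomp⟩ le_rfl
  -- Steps C and D
  have hCx : wcaRho x ≤ C * wkMeasure (Set.range x) := h x ⟨‖T‖, hxnorm⟩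
  have hrange : Set.range x ⊆ T '' closedBall 0 1 := by
    rintro _ ⟨k, rfl⟩
    exact ⟨y k, mem_closedBall_zero_iff.2 (hy1 k), rfl⟩
  have himgbd : ∀ b ∈ T '' closedBall (0:Y) 1, ‖b‖ ≤ ‖T‖ := by
    rintro _ ⟨v, hv, rfl⟩
    calc ‖T v‖ ≤ ‖T‖ * ‖v‖ := T.le_opNorm v
    _ ≤ ‖T‖ * 1 := mul_le_mul_of_nonneg_left (mem_closedBall_zero_iff.1 hv) (norm_nonneg _)
    _ = ‖T‖ := mul_one _
  have hmono : wkMeasure (Set.range x) ≤ w :=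
    wkMeasure_mono hrange (norm_nonneg T) himgbd
  have hfinal : (a - ε') / 2 - ε' ≤ C * w := by
    calc (a - ε') / 2 - ε' ≤ wcaRho x := hlowB
    _ ≤ C * wkMeasure (Set.range x) := hCx
    _ ≤ C * w := mul_le_mul_of_nonneg_left hmono (le_of_lt hC)
  have : a ≤ 2 * (C * w) + 3 * ε' := by linarith
  calc a ≤ 2 * (C * w) + 3 * ε' := this
  _ ≤ 2 * C * w + ε := by rw [hε']; ring_nf; linarith [mul_assoc 2 C w]

end Aux

/-- If `wca_ρ(x_n) ≤ C·wk_X({x_n})` for every bounded sequence in `X`, then for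
every Banach space `Y` and every operator `T : Y → X`, `cc(T*) ≤ 2C·wk_X(T(B_Y))`. -/
theorem statement11 {X : Type u} [NormedAddCommGroup X] [NormedSpace ℝ X] [CompleteSpace X]
    (C : ℝ) (hC : 0 < C)
    (h : ∀ x : ℕ → X, (∃ M : ℝ, ∀ n, ‖x n‖ ≤ M) →
      wcaRho x ≤ C * wkMeasure (Set.range x)) :
    ∀ (Y : Type v) [NormedAddCommGroup Y] [NormedSpace ℝ Y] [CompleteSpace Y]
      (T : Y →L[ℝ] X),
      cc (adjointOp T) ≤ 2 * C * wkMeasure (T '' closedBall 0 1) := by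
  intro Y _ _ _ T
  have hw : 0 ≤ wkMeasure (T '' closedBall (0:Y) 1) := wkMeasure_nonneg _
  apply Real.sSup_le
  · rintro r ⟨f, hf1, hfc, rfl⟩
    exact ca_adjoint_le C hC h T f hf1 hfc
  · have : 0 ≤ 2 * C := by linarith
    exact mul_nonneg this hw

end
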